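/- Let ω be an alternating bilinear form on a free module M of rank 2m over a commutative ring R, expressed with respect to a symplectic basis so that ω = Σ_{i=1}^m s_i* ∧ s_{m+i}*. Then the m-fold wedge power ω^m = ω ∧ … ∧ ω equals m! · (−1)^⌊m/2⌋ · s_1* ∧ s_2* ∧ … ∧ s_{2m}*. -/

import Mathlib

section Aux

variable {A : Type*} [Ring A]

/-- Move an element past a list product when it anticommutes with every entry. -/
lemma aux_move (y : A) : ∀ (l : List A), (∀ a ∈ l, y * a = -(a * y)) →
    y * l.prod = ((-1 : ℤ) ^ l.length) • (l.prod * y) := by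
  intro l
  induction l with
  | nil => simp
  | cons a t ih =>
    intro h
    have ha : y * a = -(a * y) := h a (by simp)
    have ht := ih fun x hx => h x (by simp [hx])
    calc y * (a :: t).prod = (y * a) * t.prod := by rw [List.prod_cons, mul_assoc]
      _ = -(a * (y * t.prod)) := by rw [ha, neg_mul, mul_assoc]
      _ = -(a * (((-1 : ℤ) ^ t.length) • (t.prod * y))) := by rw [ht]
      _ = ((-1 : ℤ) ^ (a :: t).length) • ((a :: t).prod * y) := by
          simp only [List.prod_cons, List.length_cons, mul_smul_comm, pow_succ,
            mul_smul, mul_assoc, neg_one_smul, smul_neg]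

lemma aux_zip : ∀ (l₁ l₂ : List A), l₁.length = l₂.length →
    (∀ a ∈ l₁, ∀ c ∈ l₂, c * a = -(a * c)) →
    (List.zipWith (· * ·) l₁ l₂).prod
      = ((-1 : ℤ) ^ (l₁.length.choose 2)) • (l₁.prod * l₂.prod) := by
  intro l₁
  induction l₁ with
  | nil => intro l₂ h _; rw [List.length_nil] at h
           simp [(List.length_eq_zero_iff.mp h.symm)]
  | cons x t ih =>
    intro l₂ hlen anti
    cases l₂ with
    | nil => simp at hlen
    | cons y u =>
      simp only [List.length_cons, Nat.succ.injEq] at hlen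
      have anti' : ∀ a ∈ t, ∀ c ∈ u, c * a = -(a * c) := by
        intro a ha c hc; exact anti a (by simp [ha]) c (by simp [hc])
      have hyt : ∀ a ∈ t, y * a = -(a * y) := by
        intro a ha; exact anti a (by simp [ha]) y (by simp)
      have ihp := ih u hlen anti'
      have hmove := aux_move y t hyt
      have hchoose : (t.length + 1).choose 2 = t.length.choose 2 + t.length := by
        rw [Nat.choose_succ_succ, Nat.choose_one_right, Nat.add_comm]
      have key : (x * y) * (t.prod * u.prod)
          = ((-1 : ℤ) ^ t.length) • ((x * t.prod) * (y * u.prod)) := by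
        calc (x * y) * (t.prod * u.prod) = x * ((y * t.prod) * u.prod) := by
              simp only [mul_assoc]
          _ = x * ((((-1 : ℤ) ^ t.length) • (t.prod * y)) * u.prod) := by rw [hmove]
          _ = ((-1 : ℤ) ^ t.length) • ((x * t.prod) * (y * u.prod)) := by
              simp only [smul_mul_assoc, mul_smul_comm, mul_assoc]
      calc (List.zipWith (· * ·) (x :: t) (y :: u)).prod
          = (x * y) * (List.zipWith (· * ·) t u).prod := by
            simp [List.zipWith_cons_cons]
        _ = (x * y) * (((-1 : ℤ) ^ (t.length.choose 2)) • (t.prod * u.prod)) := by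
            rw [ihp]
        _ = ((-1 : ℤ) ^ (t.length.choose 2)) • ((x * y) * (t.prod * u.prod)) :=
            mul_smul_comm _ _ _
        _ = ((-1 : ℤ) ^ (t.length.choose 2)) •
              (((-1 : ℤ) ^ t.length) • ((x * t.prod) * (y * u.prod))) := by rw [key]
        _ = ((-1 : ℤ) ^ ((x :: t).length.choose 2)) • ((x :: t).prod * (y :: u).prod) := by
            rw [smul_smul, ← pow_add, List.length_cons, hchoose]
            simp [List.prod_cons]

lemma aux_sum_pow_zero : ∀ (l : List A), l.Pairwise Commute → (∀ x ∈ l, x * x = 0) →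
    ∀ n, l.length < n → l.sum ^ n = 0 := by
  intro l
  induction l with
  | nil => intro _ _ n hn; simp only [List.sum_nil]
           exact zero_pow (by simp at hn; omega)
  | cons x t ih =>
    intro hp hsq n hn
    simp only [List.length_cons] at hn
    rw [List.pairwise_cons] at hp
    have hxt : Commute x t.sum := Commute.list_sum_right _ _ hp.1
    have hxx : x * x = 0 := hsq x (by simp)
    have ihz := ih hp.2 (fun y hy => hsq y (by simp [hy]))
    rw [List.sum_cons, hxt.add_pow]
    refine Finset.sum_eq_zero fun k hk => ?_
    rcases k with _ | _ | k
    · simp only [Nat.sub_zero]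
      rw [ihz n (by omega)]; simp
    · rw [ihz (n - 1) (by omega)]; simp
    · have hx2 : x ^ (k + 1 + 1) = 0 := by
        rw [pow_succ, pow_succ, mul_assoc, hxx, mul_zero]
      rw [hx2, zero_mul, zero_mul]

lemma aux_sum_pow : ∀ (l : List A), l.Pairwise Commute → (∀ x ∈ l, x * x = 0) →
    l.sum ^ l.length = l.length.factorial • l.prod := by
  intro l
  induction l with
  | nil => simp
  | cons x t ih =>
    intro hp hsq
    rw [List.pairwise_cons] at hp
    have hxt : Commute x t.sum := Commute.list_sum_right _ _ hp.1
    have hxx : x * x = 0 := hsq x (by simp)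
    have hsq' : ∀ y ∈ t, y * y = 0 := fun y hy => hsq y (List.mem_cons_of_mem _ hy)
    have ihz := aux_sum_pow_zero t hp.2 hsq'
    have ihe := ih hp.2 hsq'
    have h0 : ∀ k ∈ Finset.range (t.length + 1 + 1), k ≠ 1 →
        x ^ k * t.sum ^ (t.length + 1 - k) * ((t.length + 1).choose k : A) = 0 := by
      intro k _ hne
      rcases k with _ | _ | k
      · simp only [Nat.sub_zero]
        rw [ihz (t.length + 1) (by omega)]; simp
      · exact absurd rfl hne
      · have hx2 : x ^ (k + 1 + 1) = 0 := by
          rw [pow_succ, pow_succ, mul_assoc, hxx, mul_zero]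
        rw [hx2, zero_mul, zero_mul]
    have h1 : (1 : ℕ) ∉ Finset.range (t.length + 1 + 1) →
        x ^ 1 * t.sum ^ (t.length + 1 - 1) * ((t.length + 1).choose 1 : A) = 0 := by
      intro h
      exact absurd (Finset.mem_range.mpr (by omega)) h
    have hyc : ∀ y : A, y * ((t.length + 1 : ℕ) : A) = (t.length + 1) • y := by
      intro y
      rw [nsmul_eq_mul, (Nat.cast_commute (t.length + 1) y).eq]
    rw [List.sum_cons, List.length_cons, hxt.add_pow, Finset.sum_eq_single 1 h0 h1,
      pow_one, Nat.add_sub_cancel, ihe, Nat.choose_one_right, List.prod_cons,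
      mul_smul_comm, hyc, smul_smul, Nat.factorial_succ, Nat.mul_comm]

lemma aux_sign {B : Type*} [Monoid B] [HasDistribNeg B] (m : ℕ) :
    (-1 : B) ^ (m.choose 2) = (-1 : B) ^ (m / 2) := by
  induction m using Nat.twoStepInduction with
  | zero => rfl
  | one => rfl
  | more n ihn _ =>
    have h1 : (n + 2).choose 2 = n.choose 2 + (2 * n + 1) := by
      rw [Nat.choose_succ_succ (n + 1) 1, Nat.choose_succ_succ n 1,
        Nat.choose_one_right, Nat.choose_one_right,
        show Nat.succ 1 = 2 from rfl]
      omega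
    have h2 : (n + 2) / 2 = n / 2 + 1 := by omega
    have h3 : (-1 : B) ^ (2 * n + 1) = -1 := Odd.neg_one_pow ⟨n, by ring⟩
    rw [h1, pow_add, h3, ihn, h2, pow_succ]

lemma aux_zipWith_ofFn {α β γ : Type*} (k : α → β → γ) :
    ∀ (n : ℕ) (f : Fin n → α) (g : Fin n → β),
      List.zipWith k (List.ofFn f) (List.ofFn g) = List.ofFn fun i => k (f i) (g i) := by
  intro n
  induction n with
  | zero => intro f g; simp
  | succ n ih => intro f g; simp [List.ofFn_succ, ih]

/-- Abstract form of the main theorem: for any family of elements of a ring that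
pairwise anticommute and square to zero. -/
lemma aux_main (m : ℕ) (e : Fin (m + m) → A)
    (anti : ∀ i j : Fin (m + m), e j * e i = -(e i * e j))
    (hsqe : ∀ i : Fin (m + m), e i * e i = 0) :
    (∑ i : Fin m, e (Fin.castAdd m i) * e (Fin.natAdd m i)) ^ m
      = m.factorial • (((-1 : ℤ) ^ (m / 2)) •
          ((List.finRange (m + m)).map e).prod) := by
  set ω : Fin m → A := fun i => e (Fin.castAdd m i) * e (Fin.natAdd m i) with hω
  have key : ∀ a b x : A, x * a = -(a * x) → x * b = -(b * x) →
      (a * b) * x = x * (a * b) := by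
    intro a b x ha hb
    have ha' : a * x = -(x * a) := by rw [ha, neg_neg]
    have hb' : b * x = -(x * b) := by rw [hb, neg_neg]
    rw [mul_assoc, hb', mul_neg, ← mul_assoc, ha', neg_mul, neg_neg, mul_assoc]
  have comm4 : ∀ a b c d : A, (c * d) * a = a * (c * d) → (c * d) * b = b * (c * d) →
      (a * b) * (c * d) = (c * d) * (a * b) := by
    intro a b c d h1 h2
    calc (a * b) * (c * d) = a * (b * (c * d)) := by simp only [mul_assoc]
      _ = a * ((c * d) * b) := by rw [← h2]
      _ = (a * (c * d)) * b := by simp only [mul_assoc]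
      _ = ((c * d) * a) * b := by rw [← h1]
      _ = (c * d) * (a * b) := by simp only [mul_assoc]
  have sq4 : ∀ a b : A, b * a = -(a * b) → b * b = 0 → (a * b) * (a * b) = 0 := by
    intro a b h hbb
    calc (a * b) * (a * b) = a * ((b * a) * b) := by simp only [mul_assoc]
      _ = a * ((-(a * b)) * b) := by rw [h]
      _ = 0 := by rw [neg_mul, mul_assoc, hbb, mul_zero, neg_zero, mul_zero]
  have hcomm : ∀ i j : Fin m, Commute (ω i) (ω j) := by
    intro i j
    rcases eq_or_ne i j with rfl | hne
    · exact Commute.refl _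
    · have step1 := key (e (Fin.castAdd m j)) (e (Fin.natAdd m j)) (e (Fin.castAdd m i))
        (anti (Fin.castAdd m j) (Fin.castAdd m i)) (anti (Fin.natAdd m j) (Fin.castAdd m i))
      have step2 := key (e (Fin.castAdd m j)) (e (Fin.natAdd m j)) (e (Fin.natAdd m i))
        (anti (Fin.castAdd m j) (Fin.natAdd m i)) (anti (Fin.natAdd m j) (Fin.natAdd m i))
      show ω i * ω j = ω j * ω i
      rw [hω]
      simp only
      exact comm4 _ _ _ _ step1 step2
  have hsqω : ∀ i : Fin m, ω i * ω i = 0 := by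
    intro i
    rw [hω]; simp only
    exact sq4 _ _ (anti (Fin.castAdd m i) (Fin.natAdd m i)) (hsqe _)
  set L : List A := List.ofFn ω with hL
  have hLpair : L.Pairwise Commute := by
    rw [hL, List.pairwise_iff_getElem]
    intro i j hi hj hij
    simp only [List.getElem_ofFn]
    exact hcomm _ _
  have hLsq : ∀ x ∈ L, x * x = 0 := by
    intro x hx
    rw [hL, List.mem_ofFn] at hx
    obtain ⟨i, rfl⟩ := hx
    exact hsqω i
  have hLlen : L.length = m := by simp [hL]
  have hsum : (∑ i : Fin m, ω i) = L.sum := by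
    rw [Fin.sum_univ_def, hL, List.ofFn_eq_map]
  have hpow : (∑ i : Fin m, ω i) ^ m = m.factorial • L.prod := by
    rw [hsum, ← hLlen, aux_sum_pow L hLpair hLsq, hLlen]
  have hsplit : (List.finRange (m + m)).map e
      = List.ofFn (fun i : Fin m => e (Fin.castAdd m i))
        ++ List.ofFn (fun i : Fin m => e (Fin.natAdd m i)) := by
    rw [← List.ofFn_eq_map, List.ofFn_add]
    rfl
  have hzip : L = List.zipWith (· * ·)
      (List.ofFn (fun i : Fin m => e (Fin.castAdd m i)))
      (List.ofFn (fun i : Fin m => e (Fin.natAdd m i))) := by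
    rw [aux_zipWith_ofFn]
  have hanti2 : ∀ a ∈ List.ofFn (fun i : Fin m => e (Fin.castAdd m i)),
      ∀ c ∈ List.ofFn (fun i : Fin m => e (Fin.natAdd m i)), c * a = -(a * c) := by
    intro a ha c hc
    rw [List.mem_ofFn] at ha hc
    obtain ⟨i, rfl⟩ := ha
    obtain ⟨j, rfl⟩ := hc
    exact anti _ _
  have hprod : L.prod
      = ((-1 : ℤ) ^ (m / 2)) • ((List.finRange (m + m)).map e).prod := by
    rw [hzip, aux_zip _ _ (by simp) hanti2, List.length_ofFn, aux_sign, hsplit,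
      List.prod_append]
  rw [hpow, hprod]

end Aux

/-- In the exterior algebra of the dual module of a free module of rank
`m + m`, the `m`-th power of `ω = Σ_{i} s_i* ∧ s_{m+i}*` equals
`m! · (−1)^⌊m/2⌋ · s_1* ∧ … ∧ s_{2m}*`.  Here `s_i* = b.coord i` are the dual basis
functionals, `ι` is the canonical embedding into the exterior algebra, products of
`ι`-images are wedge products, and the top generator is the ordered product of all
`ι (b.coord i)`. -/
theorem wedge_pow_symplectic_form
    {R : Type*} [CommRing R] {M : Type*} [AddCommGroup M] [Module R M]
    (m : ℕ) (b : Module.Basis (Fin (m + m)) R M) :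
    (∑ i : Fin m,
        ExteriorAlgebra.ι R (M := Module.Dual R M) (b.coord (Fin.castAdd m i)) *
          ExteriorAlgebra.ι R (M := Module.Dual R M) (b.coord (Fin.natAdd m i))) ^ m
      = ((m.factorial : R) * (-1 : R) ^ (m / 2)) •
          ((List.finRange (m + m)).map fun i =>
            ExteriorAlgebra.ι R (M := Module.Dual R M) (b.coord i)).prod := by
  have anti : ∀ i j : Fin (m + m),
      ExteriorAlgebra.ι R (M := Module.Dual R M) (b.coord j) *
        ExteriorAlgebra.ι R (M := Module.Dual R M) (b.coord i)
      = -(ExteriorAlgebra.ι R (M := Module.Dual R M) (b.coord i) *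
          ExteriorAlgebra.ι R (M := Module.Dual R M) (b.coord j)) := by
    intro i j
    exact eq_neg_of_add_eq_zero_left
      (by rw [add_comm]; exact ExteriorAlgebra.ι_add_mul_swap _ _)
  have key := aux_main m
    (fun i => ExteriorAlgebra.ι R (M := Module.Dual R M) (b.coord i))
    (fun i j => anti i j) (fun i => ExteriorAlgebra.ι_sq_zero _)
  rw [key, mul_smul, Nat.cast_smul_eq_nsmul,
    show ((-1 : R) ^ (m / 2)) = (((-1 : ℤ) ^ (m / 2) : ℤ) : R) by push_cast; ring,
    Int.cast_smul_eq_zsmul]
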